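/- If λ is a partition of n with exactly one even part λ_1^e, odd parts λ_1^o > … > λ_t^o all distinct and less than λ_1^e, and λ_1^e − λ_1^o ≥ 3, then μ = (λ_1^e − 1, λ_1^o, …, λ_{t−1}^o, λ_t^o + 1) is a partition of n in which all odd parts are distinct and exceed the unique even part; moreover this correspondence is a bijection between such λ and the partitions of n counted by p_{eu}^{od} having exactly one even part and at least one odd part. -/

import Mathlib

def OddDistinctGtEven (M : Multiset ℕ) : Prop :=
  (M.filter (fun x => Odd x)).Nodup ∧
  ∀ o ∈ M, Odd o → ∀ e ∈ M, Even e → e < o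

def EvenGtOddDistinct (M : Multiset ℕ) : Prop :=
  (M.filter (fun x => Odd x)).Nodup ∧
  ∀ e ∈ M, Even e → ∀ o ∈ M, Odd o → o < e

/-- number of partitions of n with odd parts distinct and all greater than even parts -/
noncomputable def peuod (n : ℕ) : ℕ := Nat.card {p : n.Partition // OddDistinctGtEven p.parts}

/-- number of partitions of n with even parts all greater than the distinct odd parts -/
noncomputable def podeu (n : ℕ) : ℕ := Nat.card {p : n.Partition // EvenGtOddDistinct p.parts}

private lemma glc (a : List ℕ) (b : ℕ) : (a ++ [b]).getLast! = b := by
  induction a with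
  | nil => rfl
  | cons x xs ih => simp [List.getLast!, List.getLast_concat] at *

private lemma glc2 (E b : ℕ) (a : List ℕ) : (E :: (a ++ [b])).getLast! = b := by
  rw [show E :: (a ++ [b]) = (E :: a) ++ [b] from by simp]; exact glc _ _

theorem case_five_bijection (n : ℕ) :
    Set.BijOn
      (fun l : List ℕ => (l.head! - 1) :: (l.tail.dropLast ++ [l.getLast! + 1]))
      {l : List ℕ | ∃ (E : ℕ) (os : List ℕ), l = E :: os ∧ os ≠ [] ∧
        Even E ∧ (∀ x ∈ os, Odd x) ∧ List.Chain' (· > ·) os ∧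
        (∀ x ∈ os, x < E) ∧ os.head! + 3 ≤ E ∧ (∀ x ∈ l, 0 < x) ∧ l.sum = n}
      {l : List ℕ | ∃ (os : List ℕ) (E : ℕ), l = os ++ [E] ∧ os ≠ [] ∧
        (∀ x ∈ os, Odd x) ∧ List.Chain' (· > ·) os ∧
        Even E ∧ 0 < E ∧ (∀ x ∈ os, E < x) ∧ l.sum = n} := by
  classical
  have htr : Transitive (fun a b : ℕ => a > b) := fun a b c h1 h2 => h2.trans h1
  apply Set.InvOn.bijOn
    (f' := fun l : List ℕ => (l.head! + 1) :: (l.tail.dropLast ++ [l.getLast! - 1]))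
  · constructor
    · -- left inverse on s
      rintro l ⟨E, os, rfl, hne, hE, hodd, hchain, hlt, hhead, hpos, hsum⟩
      rcases os.eq_nil_or_concat with rfl | ⟨a, b, rfl⟩
      · exact absurd rfl hne
      simp only [List.concat_eq_append] at *
      have hE3 : 3 ≤ E := le_trans (by omega) hhead
      have hbpos : 0 < b := hpos b (by simp)
      simp [List.head!_cons, List.dropLast_concat, glc2, List.getLast?_cons,
        Nat.sub_add_cancel (by omega : 1 ≤ E)]
    · -- right inverse on t
      rintro m ⟨os, E, rfl, hne, hodd, hchain, hE, hEpos, hgt, hsum⟩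
      rcases os with _ | ⟨c, d⟩
      · exact absurd rfl hne
      simp [List.cons_append, List.head!_cons, List.tail_cons, List.dropLast_concat,
        glc2, List.getLast?_cons, Nat.sub_add_cancel hEpos]
  · -- MapsTo f s t
    rintro l ⟨E, os, rfl, hne, hE, hodd, hchain, hlt, hhead, hpos, hsum⟩
    rcases os.eq_nil_or_concat with rfl | ⟨a, b, rfl⟩
    · exact absurd rfl hne
    simp only [List.concat_eq_append] at *
    have hpair : List.Pairwise (· > ·) (a ++ [b]) := (List.isChain_iff_pairwise).mp hchain
    have hab : ∀ x ∈ a, b < x := fun x hx => (List.pairwise_append.mp hpair).2.2 x hx b (by simp)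
    have hbodd : Odd b := hodd b (by simp)
    have hmaxE : ∀ x ∈ a ++ [b], x + 3 ≤ E := by
      rcases a with _ | ⟨c, cs⟩
      · intro x hx; simp at hx; subst hx; simpa [List.head!_cons] using hhead
      · intro x hx
        have hc : c + 3 ≤ E := by simpa [List.head!_cons] using hhead
        rcases (by simpa using hx : x = c ∨ x ∈ cs ∨ x = b) with rfl | hx'
        · exact hc
        · have hp2 : ∀ y ∈ cs ++ [b], c > y := by
            have := List.pairwise_cons.mp (show List.Pairwise (· > ·) (c :: (cs ++ [b])) from
              by simpa using hpair)
            exact this.1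
          have : c > x := hp2 x (by rcases hx' with h | h <;> simp [h])
          omega
    have hbE : b + 3 ≤ E := hmaxE b (by simp)
    refine ⟨(E - 1) :: a, b + 1, ?_, by simp, ?_, ?_, hbodd.add_one, by omega, ?_, ?_⟩
    · simp [List.head!_cons, List.dropLast_concat, glc2, List.getLast?_cons]
    · rintro x hx
      rcases List.mem_cons.mp hx with rfl | hx
      · exact Nat.Even.sub_odd (by omega) hE odd_one
      · exact hodd x (by simp [hx])
    · refine List.isChain_iff_pairwise.mpr ?_; rw [List.pairwise_cons]
      refine ⟨fun x hx => ?_, (List.pairwise_append.mp hpair).1⟩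
      have := hmaxE x (by simp [hx])
      omega
    · rintro x hx
      rcases List.mem_cons.mp hx with rfl | hx
      · omega
      · have h2 : Odd x := hodd x (by simp [hx])
        have := hab x hx
        obtain ⟨i, hi⟩ := h2; obtain ⟨j, hj⟩ := hbodd
        omega
    · simp only [List.head!_cons, List.tail_cons, List.dropLast_concat, glc2,
        List.sum_cons, List.sum_append] at hsum ⊢
      omega
  · -- MapsTo g t s
    rintro m ⟨os, E, rfl, hne, hodd, hchain, hE, hEpos, hgt, hsum⟩
    rcases os with _ | ⟨c, d⟩
    · exact absurd rfl hne
    have hpair : List.Pairwise (· > ·) (c :: d) := (List.isChain_iff_pairwise).mp hchain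
    have hcd : ∀ x ∈ d, x < c := fun x hx => (List.pairwise_cons.mp hpair).1 x hx
    have hcodd : Odd c := hodd c (by simp)
    have hcE : E < c := hgt c (by simp)
    have hE2 : 2 ≤ E := by obtain ⟨j, hj⟩ := hE; omega
    refine ⟨c + 1, d ++ [E - 1], ?_, by simp, hcodd.add_one, ?_, ?_, ?_, ?_, ?_, ?_⟩
    · simp [List.head!_cons, List.dropLast_concat, glc2, List.getLast?_cons]
    · rintro x hx
      rcases List.mem_append.mp hx with hx | hx
      · exact hodd x (by simp [hx])
      · simp at hx; subst hx
        exact Nat.Even.sub_odd (by omega) hE odd_one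
    · refine List.isChain_iff_pairwise.mpr ?_; rw [List.pairwise_append]
      refine ⟨(List.pairwise_cons.mp hpair).2, by simp, fun x hx y hy => ?_⟩
      simp at hy; subst hy
      have := hgt x (by simp [hx])
      omega
    · rintro x hx
      rcases List.mem_append.mp hx with hx | hx
      · exact lt_trans (hcd x hx) (by omega)
      · simp at hx; omega
    · rcases d with _ | ⟨x, xs⟩
      · simp only [List.nil_append, glc, List.head!_cons]
        obtain ⟨j, hj⟩ := hE; obtain ⟨i, hi⟩ := hcodd; omega
      · have h1 : x < c := hcd x (by simp)
        have h2 : Odd x := hodd x (by simp)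
        obtain ⟨i, hi⟩ := h2; obtain ⟨j, hj⟩ := hcodd
        simp only [List.cons_append, List.head!_cons]
        omega
    · rintro x hx
      simp only [List.cons_append, List.head!_cons, List.tail_cons, List.dropLast_concat,
        glc2] at hx
      rcases List.mem_cons.mp hx with rfl | hx
      · omega
      · rcases List.mem_append.mp hx with hx | hx
        · exact lt_trans hEpos (hgt x (by simp [hx]))
        · simp at hx; omega
    · simp only [List.cons_append, List.head!_cons, List.tail_cons, List.dropLast_concat,
        glc2, List.sum_cons, List.sum_append] at hsum ⊢
      omega
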